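/- The discrete transformed Fokker–Planck operator is symmetric: the matrix representing the map h ↦ L̃h, where (L̃h)_{m,m'} = (1/Δv²)(h_{m,m'+1} + h_{m+1,m'} + h_{m,m'−1} + h_{m−1,m'} − M̄_{m,m'} h_{m,m'}) with M̄_{m,m'} = (√M_{m+1,m'} + √M_{m,m'+1} + √M_{m−1,m'} + √M_{m,m'−1})/√M_{m,m'} and homogeneous (zero) ghost values outside the grid, is a symmetric matrix on ℝ^{(2M)²}. -/
import Mathlib


open Real

/-- The weight `M̄_{m,m'} = (√M_{m+1,m'} + √M_{m,m'+1} + √M_{m−1,m'} + √M_{m,m'−1})/√M_{m,m'}`. -/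
noncomputable def Mbar (Mwt : ℤ → ℤ → ℝ) (m m' : ℤ) : ℝ :=
  (Real.sqrt (Mwt (m+1) m') + Real.sqrt (Mwt m (m'+1))
    + Real.sqrt (Mwt (m-1) m') + Real.sqrt (Mwt m (m'-1))) / Real.sqrt (Mwt m m')

/-- The discrete transformed Fokker–Planck operator (five-point formula). -/
noncomputable def Ldisc (Δv : ℝ) (Mwt : ℤ → ℤ → ℝ) (h : ℤ → ℤ → ℝ) (m m' : ℤ) : ℝ :=
  (1 / Δv ^ 2) * (h m (m'+1) + h (m+1) m' - Mbar Mwt m m' * h m m'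
    + h m (m'-1) + h (m-1) m')

/-- Summation-by-parts shift lemma in one variable. -/
lemma shift_sum (N : ℤ) (F G : ℤ → ℝ)
    (hF : ∀ k : ℤ, k < 1 ∨ N < k → F k = 0)
    (hG : ∀ k : ℤ, k < 1 ∨ N < k → G k = 0) :
    ∑ k ∈ Finset.Icc (1:ℤ) N, F (k+1) * G k
      = ∑ k ∈ Finset.Icc (1:ℤ) N, F k * G (k-1) := by
  have h1 : ∑ k ∈ Finset.Icc (1:ℤ) N, F (k+1) * G k
      = ∑ k ∈ Finset.Icc (2:ℤ) (N+1), F k * G (k-1) := by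
    have hmap : (Finset.Icc (1:ℤ) N).map (addRightEmbedding 1) = Finset.Icc (2:ℤ) (N+1) := by
      rw [Finset.map_add_right_Icc]; norm_num
    rw [← hmap, Finset.sum_map]
    apply Finset.sum_congr rfl
    intro k _
    simp [addRightEmbedding]
  rw [h1]
  have h2 : ∑ k ∈ Finset.Icc (2:ℤ) (N+1), F k * G (k-1)
      = ∑ k ∈ Finset.Icc (1:ℤ) (N+1), F k * G (k-1) := by
    apply Finset.sum_subset
    · exact Finset.Icc_subset_Icc_left (by norm_num)
    · intro x hx hx2
      simp only [Finset.mem_Icc] at hx hx2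
      have hx1 : x = 1 := by omega
      subst hx1
      rw [show (1:ℤ) - 1 = 0 by norm_num, hG 0 (by norm_num), mul_zero]
  have h3 : ∑ k ∈ Finset.Icc (1:ℤ) N, F k * G (k-1)
      = ∑ k ∈ Finset.Icc (1:ℤ) (N+1), F k * G (k-1) := by
    apply Finset.sum_subset
    · exact Finset.Icc_subset_Icc_right (by omega)
    · intro x hx hx2
      simp only [Finset.mem_Icc] at hx hx2
      rw [hF x (Or.inr (by omega))]
      ring
  rw [h2, h3]

/-- the discrete transformed Fokker–Planck operator, with zero ghost values
outside the `(2M)×(2M)` grid `{1,…,2M}²`, is a symmetric matrix: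
`⟨L̃h, g⟩ = ⟨h, L̃g⟩` for the standard Euclidean inner product. -/
theorem discrete_Ltilde_symmetric
    (Δv : ℝ) (hΔv : 0 < Δv) (M : ℕ) (hM : 1 ≤ M) (Mwt : ℤ → ℤ → ℝ)
    (hMpos : ∀ m m' : ℤ, 0 ≤ m → m ≤ 2*M+1 → 0 ≤ m' → m' ≤ 2*M+1 → 0 < Mwt m m')
    (h g : ℤ → ℤ → ℝ)
    (hh : ∀ m m' : ℤ, (m < 1 ∨ (2*M : ℤ) < m ∨ m' < 1 ∨ (2*M : ℤ) < m') → h m m' = 0)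
    (hg : ∀ m m' : ℤ, (m < 1 ∨ (2*M : ℤ) < m ∨ m' < 1 ∨ (2*M : ℤ) < m') → g m m' = 0) :
    ∑ m ∈ Finset.Icc (1:ℤ) (2*M), ∑ m' ∈ Finset.Icc (1:ℤ) (2*M),
        Ldisc Δv Mwt h m m' * g m m'
      = ∑ m ∈ Finset.Icc (1:ℤ) (2*M), ∑ m' ∈ Finset.Icc (1:ℤ) (2*M),
        h m m' * Ldisc Δv Mwt g m m' := by
  set N : ℤ := 2*M with hN
  set S : Finset ℤ := Finset.Icc (1:ℤ) N with hS
  set c : ℝ := 1 / Δv ^ 2 with hc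
  -- expand both sides
  have expandL : ∑ m ∈ S, ∑ m' ∈ S, Ldisc Δv Mwt h m m' * g m m'
      = c * ((∑ m ∈ S, ∑ m' ∈ S, h m (m'+1) * g m m')
        + (∑ m ∈ S, ∑ m' ∈ S, h (m+1) m' * g m m')
        + (∑ m ∈ S, ∑ m' ∈ S, h m (m'-1) * g m m')
        + (∑ m ∈ S, ∑ m' ∈ S, h (m-1) m' * g m m')
        - (∑ m ∈ S, ∑ m' ∈ S, Mbar Mwt m m' * (h m m' * g m m'))) := by
    have step : ∑ m ∈ S, ∑ m' ∈ S, Ldisc Δv Mwt h m m' * g m m'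
        = ∑ m ∈ S, ∑ m' ∈ S, (c * (h m (m'+1) * g m m') + c * (h (m+1) m' * g m m')
          + c * (h m (m'-1) * g m m') + c * (h (m-1) m' * g m m')
          - c * (Mbar Mwt m m' * (h m m' * g m m'))) := by
      apply Finset.sum_congr rfl; intro m _
      apply Finset.sum_congr rfl; intro m' _
      simp only [Ldisc, hc]; ring
    rw [step]
    simp only [Finset.sum_add_distrib, Finset.sum_sub_distrib, ← Finset.mul_sum]
    ring
  have expandR : ∑ m ∈ S, ∑ m' ∈ S, h m m' * Ldisc Δv Mwt g m m'
      = c * ((∑ m ∈ S, ∑ m' ∈ S, h m m' * g m (m'+1))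
        + (∑ m ∈ S, ∑ m' ∈ S, h m m' * g (m+1) m')
        + (∑ m ∈ S, ∑ m' ∈ S, h m m' * g m (m'-1))
        + (∑ m ∈ S, ∑ m' ∈ S, h m m' * g (m-1) m')
        - (∑ m ∈ S, ∑ m' ∈ S, Mbar Mwt m m' * (h m m' * g m m'))) := by
    have step : ∑ m ∈ S, ∑ m' ∈ S, h m m' * Ldisc Δv Mwt g m m'
        = ∑ m ∈ S, ∑ m' ∈ S, (c * (h m m' * g m (m'+1)) + c * (h m m' * g (m+1) m')
          + c * (h m m' * g m (m'-1)) + c * (h m m' * g (m-1) m')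
          - c * (Mbar Mwt m m' * (h m m' * g m m'))) := by
      apply Finset.sum_congr rfl; intro m _
      apply Finset.sum_congr rfl; intro m' _
      simp only [Ldisc, hc]; ring
    rw [step]
    simp only [Finset.sum_add_distrib, Finset.sum_sub_distrib, ← Finset.mul_sum]
    ring
  rw [expandL, expandR]
  congr 1
  -- the four shifted terms
  have T1 : (∑ m ∈ S, ∑ m' ∈ S, h m (m'+1) * g m m')
      = ∑ m ∈ S, ∑ m' ∈ S, h m m' * g m (m'-1) := by
    apply Finset.sum_congr rfl
    intro m _
    exact shift_sum N (fun k => h m k) (fun k => g m k)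
      (fun k hk => hh m k (by tauto)) (fun k hk => hg m k (by tauto))
  have T3 : (∑ m ∈ S, ∑ m' ∈ S, h m (m'-1) * g m m')
      = ∑ m ∈ S, ∑ m' ∈ S, h m m' * g m (m'+1) := by
    apply Finset.sum_congr rfl
    intro m _
    have := shift_sum N (fun k => g m k) (fun k => h m k)
      (fun k hk => hg m k (by tauto)) (fun k hk => hh m k (by tauto))
    calc ∑ m' ∈ S, h m (m'-1) * g m m' = ∑ m' ∈ S, g m m' * h m (m'-1) := by
          apply Finset.sum_congr rfl; intros; ring
      _ = ∑ m' ∈ S, g m (m'+1) * h m m' := this.symm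
      _ = ∑ m' ∈ S, h m m' * g m (m'+1) := by
          apply Finset.sum_congr rfl; intros; ring
  have T2 : (∑ m ∈ S, ∑ m' ∈ S, h (m+1) m' * g m m')
      = ∑ m ∈ S, ∑ m' ∈ S, h m m' * g (m-1) m' := by
    rw [Finset.sum_comm]
    rw [show (∑ m ∈ S, ∑ m' ∈ S, h m m' * g (m-1) m')
        = ∑ m' ∈ S, ∑ m ∈ S, h m m' * g (m-1) m' from Finset.sum_comm]
    apply Finset.sum_congr rfl
    intro m' _
    exact shift_sum N (fun k => h k m') (fun k => g k m')
      (fun k hk => hh k m' (by tauto)) (fun k hk => hg k m' (by tauto))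
  have T4 : (∑ m ∈ S, ∑ m' ∈ S, h (m-1) m' * g m m')
      = ∑ m ∈ S, ∑ m' ∈ S, h m m' * g (m+1) m' := by
    rw [Finset.sum_comm]
    rw [show (∑ m ∈ S, ∑ m' ∈ S, h m m' * g (m+1) m')
        = ∑ m' ∈ S, ∑ m ∈ S, h m m' * g (m+1) m' from Finset.sum_comm]
    apply Finset.sum_congr rfl
    intro m' _
    have := shift_sum N (fun k => g k m') (fun k => h k m')
      (fun k hk => hg k m' (by tauto)) (fun k hk => hh k m' (by tauto))
    calc ∑ m ∈ S, h (m-1) m' * g m m' = ∑ m ∈ S, g m m' * h (m-1) m' := by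
          apply Finset.sum_congr rfl; intros; ring
      _ = ∑ m ∈ S, g (m+1) m' * h m m' := this.symm
      _ = ∑ m ∈ S, h m m' * g (m+1) m' := by
          apply Finset.sum_congr rfl; intros; ring
  rw [T1, T2, T3, T4]
  ring
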